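/- Let ω be a nondecreasing positive weight. Then sup_{N≥1} ω̃(N)/ω(N) < ∞ if and only if i_ω > 0, where ω̃(N) = Σ_{n=1}^N ω(n)/n and i_ω = sup_{M>1} ln(φ_ω(M))/ln(M) with φ_ω(M) = inf_{k≥1} ω(Mk)/ω(k). -/

import Mathlib

open scoped ENNReal

/-- Harmonic block lower bound. -/
lemma harmonic_block (ω : ℕ → ℝ) (hpos : ∀ n, 1 ≤ n → 0 < ω n)
    (hmono : ∀ m n, 1 ≤ m → m ≤ n → ω m ≤ ω n) (k : ℕ) (hk : 1 ≤ k) :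
    ∀ m : ℕ, (m : ℝ) / 2 * ω k ≤ ∑ n ∈ Finset.Ioc k (2 ^ m * k), ω n / n := by
  intro m
  induction m with
  | zero => simp
  | succ m ih =>
    have h1 : k ≤ 2 ^ m * k := Nat.le_mul_of_pos_left k (pow_pos (by norm_num) m)
    have h2 : 2 ^ m * k ≤ 2 ^ (m + 1) * k :=
      Nat.mul_le_mul_right k (Nat.pow_le_pow_right (by norm_num) (Nat.le_succ m))
    have hsplit := Finset.sum_Ioc_consecutive (fun n : ℕ => ω n / n) h1 h2
    rw [← hsplit]
    have hblock : ω k / 2 ≤ ∑ n ∈ Finset.Ioc (2 ^ m * k) (2 ^ (m + 1) * k), ω n / n := by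
      have hcard : (Finset.Ioc (2 ^ m * k) (2 ^ (m + 1) * k)).card = 2 ^ m * k := by
        rw [Nat.card_Ioc]
        have : 2 ^ (m + 1) * k = 2 * (2 ^ m * k) := by ring
        omega
      have hterm : ∀ n ∈ Finset.Ioc (2 ^ m * k) (2 ^ (m + 1) * k),
          ω k / (2 ^ (m + 1) * k : ℝ) ≤ ω n / n := by
        intro n hn
        rw [Finset.mem_Ioc] at hn
        have hn1 : 1 ≤ n := le_trans (le_trans hk h1) (le_of_lt hn.1)
        apply div_le_div₀ (le_of_lt (hpos n hn1))
          (hmono k n hk (le_trans h1 (le_of_lt hn.1)))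
          (by exact_mod_cast Nat.lt_of_lt_of_le Nat.zero_lt_one hn1)
        exact_mod_cast hn.2
      have := Finset.card_nsmul_le_sum _ _ _ hterm
      rw [hcard, nsmul_eq_mul] at this
      refine le_trans (le_of_eq ?_) this
      have hne : ((2 : ℝ) ^ m * k) ≠ 0 := by positivity
      push_cast
      field_simp
      ring
    have := add_le_add ih hblock
    refine le_trans (le_of_eq ?_) this
    push_cast
    ring

/-- Key: dilation step implies boundedness of partial sums. -/
lemma bounded_of_step (ω : ℕ → ℝ) (hpos : ∀ n, 1 ≤ n → 0 < ω n)
    (hmono : ∀ m n, 1 ≤ m → m ≤ n → ω m ≤ ω n) (M : ℕ) (hM : 2 ≤ M) (q : ℝ) (hq : 1 < q)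
    (hstep : ∀ k : ℕ, 1 ≤ k → q * ω k ≤ ω (M * k)) :
    ∀ N : ℕ, 1 ≤ N → ∑ n ∈ Finset.Ioc 0 N, ω n / n ≤ (M * q / (q - 1)) * ω N := by
  have hq1 : (0:ℝ) < q - 1 := by linarith
  have hC0 : (0:ℝ) ≤ (M : ℝ) * q / (q - 1) := by positivity
  have hCM : (M : ℝ) ≤ (M : ℝ) * q / (q - 1) := by
    rw [le_div_iff₀ hq1]; nlinarith [Nat.cast_nonneg (α := ℝ) M]
  intro N
  induction N using Nat.strong_induction_on with
  | _ N ih =>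
    intro hN
    have hωN := hpos N hN
    by_cases hcase : N < M
    · -- small case
      have hsum : ∑ n ∈ Finset.Ioc 0 N, ω n / n ≤ (N : ℝ) * ω N := by
        have := Finset.sum_le_card_nsmul (Finset.Ioc 0 N) (fun n => ω n / n) (ω N) ?_
        · rwa [Nat.card_Ioc, Nat.sub_zero, nsmul_eq_mul] at this
        · intro n hn
          rw [Finset.mem_Ioc] at hn
          have hn1 : 1 ≤ n := hn.1
          calc ω n / n ≤ ω n / 1 := by
                apply div_le_div_of_nonneg_left (le_of_lt (hpos n hn1)) (by norm_num)
                exact_mod_cast hn1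
            _ = ω n := div_one _
            _ ≤ ω N := hmono n N hn1 hn.2
      refine hsum.trans ?_
      have hNM : (N : ℝ) ≤ M := by exact_mod_cast le_of_lt hcase
      nlinarith
    · push_neg at hcase
      set k := N / M with hkdef
      have hM0 : 0 < M := by omega
      have hk1 : 1 ≤ k := (Nat.one_le_div_iff hM0).mpr hcase
      have hkN : k < N := Nat.div_lt_self (by omega) (by omega)
      have hsplit := Finset.sum_Ioc_consecutive (fun n : ℕ => ω n / n)
        (Nat.zero_le k) (le_of_lt hkN)
      rw [← hsplit]
      have h1 := ih k hkN hk1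
      have hMk : M * k ≤ N := by rw [mul_comm]; exact Nat.div_mul_le_self N M
      have hωk : q * ω k ≤ ω N :=
        le_trans (hstep k hk1) (hmono (M * k) N (by nlinarith [hk1, hM0]; ) hMk)
      have hNlt : N < M * (k + 1) := by
        have h1' := Nat.div_add_mod N M
        have h2' := Nat.mod_lt N hM0
        rw [Nat.mul_succ, hkdef]
        omega
      have htail : ∑ n ∈ Finset.Ioc k N, ω n / n ≤ (M : ℝ) * ω N := by
        have hterm : ∀ n ∈ Finset.Ioc k N, ω n / n ≤ ω N / (k + 1 : ℝ) := by
          intro n hn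
          rw [Finset.mem_Ioc] at hn
          have hn1 : 1 ≤ n := le_trans hk1 (le_of_lt hn.1)
          apply div_le_div₀ (le_of_lt hωN) (hmono n N hn1 hn.2) (by positivity)
          exact_mod_cast hn.1
        have := Finset.sum_le_card_nsmul _ _ _ hterm
        rw [Nat.card_Ioc, nsmul_eq_mul] at this
        refine this.trans ?_
        have hNk : ((N - k : ℕ) : ℝ) ≤ (M : ℝ) * (k + 1 : ℝ) := by
          have : ((N - k : ℕ) : ℝ) ≤ (N : ℝ) := by
            exact_mod_cast Nat.sub_le N k
          refine this.trans ?_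
          exact_mod_cast le_of_lt hNlt
        have hk1' : (0:ℝ) < (k : ℝ) + 1 := by positivity
        rw [div_eq_mul_inv, ← mul_assoc]
        rw [mul_inv_le_iff₀ hk1', mul_comm ((M : ℝ) * ω N)]
        calc ((N - k : ℕ) : ℝ) * ω N ≤ ((M : ℝ) * (k + 1)) * ω N := by
              apply mul_le_mul_of_nonneg_right hNk (le_of_lt hωN)
          _ = (M : ℝ) * ω N * ((k:ℝ) + 1) := by ring
          _ = ((k:ℝ) + 1) * ((M : ℝ) * ω N) := by ring
      have hωkN : ω k ≤ ω N / q := by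
        rw [le_div_iff₀ (by linarith : (0:ℝ) < q)]
        linarith [hωk]
      calc (∑ n ∈ Finset.Ioc 0 k, ω n / n) + ∑ n ∈ Finset.Ioc k N, ω n / n
          ≤ (M * q / (q - 1)) * ω k + (M : ℝ) * ω N := add_le_add h1 htail
        _ ≤ (M * q / (q - 1)) * (ω N / q) + (M : ℝ) * ω N := by
            apply add_le_add_left
            exact mul_le_mul_of_nonneg_left hωkN hC0
        _ = (M * q / (q - 1)) * ω N := by
            field_simp
            ring

/-- φ_ω(M) = inf_{k≥1} ω(Mk)/ω(k). -/
noncomputable def phiDil (ω : ℕ → ℝ) (M : ℕ) : ℝ :=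
  sInf {r : ℝ | ∃ k, 1 ≤ k ∧ r = ω (M * k) / ω k}

/-- The lower dilation index i_ω = sup_{M ≥ 2} ln(φ_ω(M))/ln(M), valued in [0,∞]. -/
noncomputable def lowerIndex (ω : ℕ → ℝ) : ℝ≥0∞ :=
  ⨆ M : {M : ℕ // 2 ≤ M}, ENNReal.ofReal (Real.log (phiDil ω M) / Real.log M)

/-- sup_{N≥1} ω̃(N)/ω(N) < ∞ iff i_ω > 0, for ω nondecreasing positive. -/
theorem stmt6 (ω : ℕ → ℝ) (hpos : ∀ n, 1 ≤ n → 0 < ω n)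
    (hmono : ∀ m n, 1 ≤ m → m ≤ n → ω m ≤ ω n) :
    (∃ C : ℝ, ∀ N : ℕ, 1 ≤ N →
        (∑ n ∈ Finset.Icc 1 N, ω n / n) / ω N ≤ C) ↔ 0 < lowerIndex ω := by
  have hIcc : ∀ N : ℕ, Finset.Icc 1 N = Finset.Ioc 0 N := by
    intro N; rfl
  constructor
  · rintro ⟨C, hC⟩
    have hC1 : 1 ≤ C := by
      have h := hC 1 le_rfl
      simpa [div_self (ne_of_gt (hpos 1 le_rfl))] using h
    set m : ℕ := ⌈4 * C⌉₊ with hmdef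
    have hm : 4 * C ≤ (m : ℝ) := Nat.le_ceil _
    have hm4 : 4 ≤ m := by
      have : (4 : ℝ) ≤ (m : ℝ) := by linarith
      exact_mod_cast this
    set M : ℕ := 2 ^ m with hMdef
    have hM2 : 2 ≤ M := by
      calc 2 = 2 ^ 1 := rfl
        _ ≤ 2 ^ m := Nat.pow_le_pow_right (by norm_num) (by omega)
    have hkey : ∀ k : ℕ, 1 ≤ k → 2 * ω k ≤ ω (M * k) := by
      intro k hk
      have hMk1 : 1 ≤ M * k := le_trans hk (Nat.le_mul_of_pos_left k (by omega))
      have hblock := harmonic_block ω hpos hmono k hk m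
      have hsub : ∑ n ∈ Finset.Ioc k (M * k), ω n / n
          ≤ ∑ n ∈ Finset.Ioc 0 (M * k), ω n / n := by
        apply Finset.sum_le_sum_of_subset_of_nonneg
          (Finset.Ioc_subset_Ioc_left (Nat.zero_le k))
        intro n hn _
        rw [Finset.mem_Ioc] at hn
        exact div_nonneg (le_of_lt (hpos n hn.1)) (Nat.cast_nonneg n)
      have hupper : ∑ n ∈ Finset.Ioc 0 (M * k), ω n / n ≤ C * ω (M * k) := by
        have h := hC (M * k) hMk1
        rw [hIcc, div_le_iff₀ (hpos _ hMk1)] at h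
        linarith
      have hchain : (m : ℝ) / 2 * ω k ≤ C * ω (M * k) := le_trans hblock (le_trans hsub hupper)
      have hωk := hpos k hk
      nlinarith
    have hne : {r : ℝ | ∃ k, 1 ≤ k ∧ r = ω (M * k) / ω k}.Nonempty := by
      exact ⟨ω (M * 1) / ω 1, 1, le_rfl, rfl⟩
    have hφ : 2 ≤ phiDil ω M := by
      apply le_csInf hne
      rintro r ⟨k, hk, rfl⟩
      rw [le_div_iff₀ (hpos k hk)]
      linarith [hkey k hk]
    have hpos' : (0 : ℝ≥0∞) < ENNReal.ofReal (Real.log (phiDil ω M) / Real.log M) := by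
      rw [ENNReal.ofReal_pos]
      apply div_pos (Real.log_pos (by linarith)) (Real.log_pos (by exact_mod_cast hM2))
    calc (0 : ℝ≥0∞) < ENNReal.ofReal (Real.log (phiDil ω M) / Real.log M) := hpos'
      _ ≤ lowerIndex ω := le_iSup (fun M : {M : ℕ // 2 ≤ M} =>
          ENNReal.ofReal (Real.log (phiDil ω (M : ℕ)) / Real.log (M : ℕ))) ⟨M, hM2⟩
  · intro h
    rw [lowerIndex, lt_iSup_iff] at h
    obtain ⟨⟨M, hM⟩, hMpos⟩ := h
    rw [ENNReal.ofReal_pos] at hMpos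
    have hlogM : 0 < Real.log M := Real.log_pos (by exact_mod_cast hM)
    have hne : {r : ℝ | ∃ k, 1 ≤ k ∧ r = ω (M * k) / ω k}.Nonempty := by
      exact ⟨ω (M * 1) / ω 1, 1, le_rfl, rfl⟩
    have hbdd : BddBelow {r : ℝ | ∃ k, 1 ≤ k ∧ r = ω (M * k) / ω k} := by
      refine ⟨1, ?_⟩
      rintro r ⟨k, hk, rfl⟩
      rw [le_div_iff₀ (hpos k hk), one_mul]
      exact hmono k (M * k) hk (Nat.le_mul_of_pos_left k (by omega))
    have hφ1 : 1 ≤ phiDil ω M := by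
      apply le_csInf hne
      rintro r ⟨k, hk, rfl⟩
      rw [le_div_iff₀ (hpos k hk), one_mul]
      exact hmono k (M * k) hk (Nat.le_mul_of_pos_left k (by omega))
    have hφ : 1 < phiDil ω M := by
      by_contra h'
      push_neg at h'
      have : Real.log (phiDil ω M) ≤ 0 := Real.log_nonpos (by linarith) h'
      have : Real.log (phiDil ω M) / Real.log M ≤ 0 :=
        div_nonpos_of_nonpos_of_nonneg this (le_of_lt hlogM)
      linarith [hMpos]
    have hstep : ∀ k : ℕ, 1 ≤ k → phiDil ω M * ω k ≤ ω (M * k) := by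
      intro k hk
      have h1 : phiDil ω M ≤ ω (M * k) / ω k := csInf_le hbdd ⟨k, hk, rfl⟩
      rwa [le_div_iff₀ (hpos k hk)] at h1
    refine ⟨(M : ℝ) * phiDil ω M / (phiDil ω M - 1), fun N hN => ?_⟩
    rw [hIcc, div_le_iff₀ (hpos N hN)]
    exact bounded_of_step ω hpos hmono M hM (phiDil ω M) hφ hstep N hN
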